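/- Let a ∈ ℝ⁴ and let γ : I → S³ ⊂ ℝ⁴ be a unit-speed curve satisfying γ''(s) + γ(s) = q · (V(γ(s)) ×_{S³} γ'(s)) where V(p) = a − ⟨a,p⟩p and ×_{S³} is the spherical cross product. Then the function f(s) = ⟨γ(s), a⟩ satisfies f'' + f = 0, hence f(s) = a₁ cos s + a₂ sin s for constants a₁, a₂. -/

import Mathlib

def dot4 (u v : Fin 4 → ℝ) : ℝ := ∑ i, u i * v i

/-- Determinant of the `4×4` matrix with rows (equivalently columns)
`u, v, w, p`. -/
def det4 (u v w p : Fin 4 → ℝ) : ℝ := (Matrix.of ![u, v, w, p]).det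

lemma hasDerivAt_dot4 {γ : ℝ → (Fin 4 → ℝ)} {d : Fin 4 → ℝ} {s : ℝ}
    (h : HasDerivAt γ d s) (a : Fin 4 → ℝ) :
    HasDerivAt (fun t => dot4 (γ t) a) (dot4 d a) s := by
  unfold dot4
  exact HasDerivAt.fun_sum fun i _ => (hasDerivAt_pi.mp h i).mul_const _

lemma det4_row_eq (u v w : Fin 4 → ℝ) : det4 u v u w = 0 := by
  apply Matrix.det_zero_of_row_eq (i := 0) (j := 2)
  · decide
  · ext k; simp [Matrix.of_apply]

/-- For a unit-speed conformal trajectory on `S³` of `V(p) = a - ⟨a,p⟩p`,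
the function `f(s) = ⟨γ(s), a⟩` satisfies `f'' + f = 0`, hence
`f(s) = a₁ cos s + a₂ sin s`.  Here `X s` is the spherical cross product
`V(γ(s)) ×_{S³} γ'(s)`, characterized by tangency and
`⟨X, w⟩ = det(V, γ', w, γ)` for tangent `w`. -/
theorem stmt8 (I : Set ℝ) (hI : IsOpen I) (hconv : Convex ℝ I)
    (a : Fin 4 → ℝ) (q : ℝ)
    (γ g g' X : ℝ → (Fin 4 → ℝ))
    (hd1 : ∀ s ∈ I, HasDerivAt γ (g s) s)
    (hd2 : ∀ s ∈ I, HasDerivAt g (g' s) s)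
    (hsph : ∀ s ∈ I, dot4 (γ s) (γ s) = 1)
    (hunit : ∀ s ∈ I, dot4 (g s) (g s) = 1)
    (hXt : ∀ s ∈ I, dot4 (X s) (γ s) = 0)
    (hX : ∀ s ∈ I, ∀ w, dot4 w (γ s) = 0 →
      dot4 (X s) w = det4 (a - dot4 a (γ s) • γ s) (g s) w (γ s))
    (heq : ∀ s ∈ I, g' s + γ s = q • X s) :
    (∀ s ∈ I, dot4 (g' s) a + dot4 (γ s) a = 0) ∧
    ∃ a₁ a₂ : ℝ, ∀ s ∈ I, dot4 (γ s) a = a₁ * Real.cos s + a₂ * Real.sin s := by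
  -- Main ODE: f'' + f = 0
  have key : ∀ s ∈ I, dot4 (g' s) a + dot4 (γ s) a = 0 := by
    intro s hs
    set w : Fin 4 → ℝ := a - dot4 a (γ s) • γ s with hw
    have hwt : dot4 w (γ s) = 0 := by
      have h1 := hsph s hs
      simp only [hw, dot4, Fin.sum_univ_four, Pi.sub_apply, Pi.smul_apply,
        smul_eq_mul] at *
      linear_combination (-(a 0 * γ s 0 + a 1 * γ s 1 + a 2 * γ s 2 + a 3 * γ s 3)) * h1
    have hXw : dot4 (X s) w = 0 := by
      rw [hX s hs w hwt, hw]
      exact det4_row_eq _ _ _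
    have hXa : dot4 (X s) a = 0 := by
      have h2 := hXt s hs
      simp only [hw, dot4, Fin.sum_univ_four, Pi.sub_apply, Pi.smul_apply,
        smul_eq_mul] at hXw h2 ⊢
      linear_combination hXw + (a 0 * γ s 0 + a 1 * γ s 1 + a 2 * γ s 2 + a 3 * γ s 3) * h2
    have h3 := heq s hs
    have : dot4 (g' s + γ s) a = dot4 (q • X s) a := by rw [h3]
    simp only [dot4, Fin.sum_univ_four, Pi.add_apply, Pi.smul_apply,
      smul_eq_mul] at this hXa ⊢
    linear_combination this + q * hXa
  refine ⟨key, ?_⟩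
  rcases Set.eq_empty_or_nonempty I with hIe | ⟨s₀, hs₀⟩
  · exact ⟨0, 0, by simp [hIe]⟩
  set f : ℝ → ℝ := fun s => dot4 (γ s) a with hf
  set f' : ℝ → ℝ := fun s => dot4 (g s) a with hf'
  have hdf : ∀ s ∈ I, HasDerivAt f (f' s) s := fun s hs =>
    hasDerivAt_dot4 (hd1 s hs) a
  have hdf' : ∀ s ∈ I, HasDerivAt f' (-(f s)) s := by
    intro s hs
    have := hasDerivAt_dot4 (hd2 s hs) a
    have hk := key s hs
    have : dot4 (g' s) a = -(f s) := by simp [hf]; linarith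
    rw [← this]
    exact hasDerivAt_dot4 (hd2 s hs) a
  set u : ℝ → ℝ := fun s => f s * Real.cos s - f' s * Real.sin s with hu
  set v : ℝ → ℝ := fun s => f s * Real.sin s + f' s * Real.cos s with hv
  have hdu : ∀ s ∈ I, HasDerivAt u 0 s := by
    intro s hs
    have h1 := ((hdf s hs).fun_mul (Real.hasDerivAt_cos s)).fun_sub
      ((hdf' s hs).fun_mul (Real.hasDerivAt_sin s))
    exact h1.congr_deriv (by ring)
  have hdv : ∀ s ∈ I, HasDerivAt v 0 s := by
    intro s hs
    have h1 := ((hdf s hs).fun_mul (Real.hasDerivAt_sin s)).fun_add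
      ((hdf' s hs).fun_mul (Real.hasDerivAt_cos s))
    exact h1.congr_deriv (by ring)
  have const : ∀ (F : ℝ → ℝ), (∀ s ∈ I, HasDerivAt F 0 s) →
      ∀ s ∈ I, F s = F s₀ := by
    intro F hF s hs
    have hdiff : DifferentiableOn ℝ F I := fun t ht =>
      (hF t ht).differentiableAt.differentiableWithinAt
    apply hconv.is_const_of_fderivWithin_eq_zero hdiff _ hs hs₀
    intro t ht
    have := ((hF t ht).hasFDerivAt.hasFDerivWithinAt).fderivWithin (hI.uniqueDiffWithinAt ht)
    rw [this]
    ext x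
    simp
  refine ⟨u s₀, v s₀, fun s hs => ?_⟩
  have hus := const u hdu s hs
  have hvs := const v hdv s hs
  have hpy := Real.sin_sq_add_cos_sq s
  have : f s = u s * Real.cos s + v s * Real.sin s := by
    simp only [hu, hv]; linear_combination (-(f s)) * hpy
  rw [show dot4 (γ s) a = f s from rfl, this, hus, hvs]
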